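/- Let P be a finite p-group and Q a normal subgroup of P. For any subgroup R of P, if the intersection N_P(R) ∩ Q is contained in R, then Q is contained in R. -/

import Mathlib

open scoped Pointwise in
/-- Let `P` be a finite `p`-group, `Q ⊴ P` and `R ≤ P`. If `N_P(R) ∩ Q ≤ R`, then
`Q ≤ R`. -/
theorem le_of_normalizer_inf_le {p : ℕ} [Fact p.Prime] {P : Type*} [Group P] [Finite P]
    (hP : IsPGroup p P) (Q : Subgroup P) (hQ : Q.Normal) (R : Subgroup P)
    (h : Subgroup.normalizer (R : Set P) ⊓ Q ≤ R) : Q ≤ R := by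
  by_contra hQR
  set T : Subgroup P := R ⊔ Q with hT
  have hRT : R ≤ T := le_sup_left
  haveI : Group.IsNilpotent ↥T := (hP.to_subgroup T).isNilpotent
  have hnc : NormalizerCondition ↥T := normalizerCondition_of_isNilpotent
  have hlt : R.subgroupOf T < ⊤ := by
    rw [lt_top_iff_ne_top]
    intro htop
    exact hQR (le_sup_right.trans (Subgroup.subgroupOf_eq_top.mp htop))
  obtain ⟨x, hx_mem, hx_not⟩ := SetLike.exists_of_lt (hnc _ hlt)
  -- x : ↥T normalizes R.subgroupOf T but is not in it.
  have hxN : (x : P) ∈ Subgroup.normalizer (R : Set P) := by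
    rw [Subgroup.mem_normalizer_iff]
    intro g
    constructor
    · intro hg
      have hgT : g ∈ T := hRT hg
      have h2 := (Subgroup.mem_normalizer_iff.mp hx_mem ⟨g, hgT⟩).mp
        (Subgroup.mem_subgroupOf.mpr hg)
      simpa using Subgroup.mem_subgroupOf.mp h2
    · intro hg
      have hgT : (x : P) * g * (x : P)⁻¹ ∈ T := hRT hg
      have hx_inv : x⁻¹ ∈ Subgroup.normalizer ((R.subgroupOf T : Subgroup ↥T) : Set ↥T) := inv_mem hx_mem
      have h2 := (Subgroup.mem_normalizer_iff.mp hx_inv ⟨(x : P) * g * (x : P)⁻¹, hgT⟩).mp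
        (Subgroup.mem_subgroupOf.mpr hg)
      have h3 := Subgroup.mem_subgroupOf.mp h2
      simpa [mul_assoc] using h3
  -- write x = r * q with r ∈ R, q ∈ Q
  have hxT : (x : P) ∈ ((R : Set P) * (Q : Set P)) := by
    rw [← Subgroup.mul_normal R Q]; exact x.2
  obtain ⟨r, hr, q, hq, hrq⟩ := hxT
  have hqN : q ∈ Subgroup.normalizer (R : Set P) := by
    have hq' : q = r⁻¹ * (x : P) := by rw [← hrq]; group
    rw [hq']
    exact mul_mem (inv_mem (Subgroup.le_normalizer hr)) hxN
  have hqR : q ∈ R := h ⟨hqN, hq⟩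
  have hxR : (x : P) ∈ R := by rw [← hrq]; exact mul_mem hr hqR
  exact hx_not (Subgroup.mem_subgroupOf.mpr hxR)
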